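/- Let F be a field, k ≥ 1 a natural number, and G a k²×k² matrix over F, with rows and columns indexed by pairs (i,s) ∈ {1,...,k}×{1,...,k}, such that every square submatrix of G is invertible. Let m, m' : {1,...,k}×{1,...,k} → F be message vectors and set p = Gm, p' = Gm'. Fix i ∈ {1,...,k}. If m(j,k) = m'(j,k) for all j ∈ {1,...,k}, and p(j,s) = p'(j,s) for all j ≠ i and all s ∈ {1,...,k}, then m = m' (and consequently p = p'). (In other words, in the clustered code where node N(1,j) stores the message block m_j and node N(2,j) stores the parity block p_j, a failed parity node N(2,i) is exactly regenerated from the full contents of the other k−1 parity nodes together with one symbol m(j,k) from each of the k systematic nodes.) -/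
import Mathlib


/-- Every square submatrix of `G` is invertible: for every size `r` and every
injective choice of `r` rows and `r` columns, the corresponding `r × r`
submatrix has nonzero determinant. -/
def AllSquareSubmatricesInvertible {F : Type*} [Field F] {ι : Type*} [DecidableEq ι]
    (G : Matrix ι ι F) : Prop :=
  ∀ (r : ℕ) (f g : Fin r → ι), Function.Injective f → Function.Injective g →
    (G.submatrix f g).det ≠ 0

/-- Exact regeneration of a failed parity node `N(2,i)`: in Construction 1
for the `[2k,k,2]` clustered DSS with `ε = 1/(n-k)`, the message vector (and
hence the lost parity block) is determined by the contents of the other `k-1`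
parity nodes together with one symbol `m(j,k)` of each of the `k`
systematic nodes. -/
theorem parity_node_exact_regeneration
    {F : Type*} [Field F] {k : ℕ} (hk : 1 ≤ k)
    (G : Matrix (Fin k × Fin k) (Fin k × Fin k) F)
    (hG : AllSquareSubmatricesInvertible G)
    (m m' : Fin k × Fin k → F)
    (p p' : Fin k × Fin k → F)
    (hp : p = G.mulVec m) (hp' : p' = G.mulVec m')
    (i : Fin k)
    (hmsg : ∀ j : Fin k, m (j, ⟨k - 1, by omega⟩) = m' (j, ⟨k - 1, by omega⟩))
    (hpar : ∀ j : Fin k, j ≠ i → ∀ s : Fin k, p (j, s) = p' (j, s)) :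
    m = m' ∧ p = p' := by
  set last : Fin k := ⟨k - 1, by omega⟩ with hlast
  -- difference vector
  set d : Fin k × Fin k → F := fun c => m c - m' c with hd
  have hdlast : ∀ c : Fin k × Fin k, c.2 = last → d c = 0 := by
    rintro ⟨a, b⟩ h
    simp only at h
    subst h
    simp [hd, hmsg a]
  -- cardinalities
  have eR : {x : Fin k × Fin k // x.1 = i} ≃ Fin k :=
    { toFun := fun x => x.val.2
      invFun := fun s => ⟨(i, s), rfl⟩
      left_inv := by rintro ⟨⟨a, b⟩, h⟩; simp only at h; subst h; rfl
      right_inv := fun s => rfl }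
  have eC : {x : Fin k × Fin k // x.2 = last} ≃ Fin k :=
    { toFun := fun x => x.val.1
      invFun := fun s => ⟨(s, last), rfl⟩
      left_inv := by rintro ⟨⟨a, b⟩, h⟩; simp only at h; subst h; rfl
      right_inv := fun s => rfl }
  have hcardR : Fintype.card {x : Fin k × Fin k // x.1 ≠ i} = k * k - k := by
    have := Fintype.card_subtype_compl (fun x : Fin k × Fin k => x.1 = i)
    rw [this, Fintype.card_congr eR]
    simp
  have hcardC : Fintype.card {x : Fin k × Fin k // x.2 ≠ last} = k * k - k := by
    have := Fintype.card_subtype_compl (fun x : Fin k × Fin k => x.2 = last)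
    rw [this, Fintype.card_congr eC]
    simp
  set N : ℕ := k * k - k with hN
  let e1 : Fin N ≃ {x : Fin k × Fin k // x.1 ≠ i} := (Fintype.equivFinOfCardEq hcardR).symm
  let e2 : Fin N ≃ {x : Fin k × Fin k // x.2 ≠ last} := (Fintype.equivFinOfCardEq hcardC).symm
  set f : Fin N → Fin k × Fin k := fun j => (e1 j).val with hf
  set g : Fin N → Fin k × Fin k := fun j => (e2 j).val with hg
  have hfi : Function.Injective f := Subtype.val_injective.comp e1.injective
  have hgi : Function.Injective g := Subtype.val_injective.comp e2.injective
  have hdet : (G.submatrix f g).det ≠ 0 := hG N f g hfi hgi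
  -- the vector of unknown differences
  set v : Fin N → F := fun j => d (g j) with hv
  -- the parity rows with j ≠ i vanish on d
  have hrow : ∀ r : Fin k × Fin k, r.1 ≠ i → ∑ c : Fin k × Fin k, G r c * d c = 0 := by
    intro r hr
    have : ∑ c : Fin k × Fin k, G r c * d c
        = (G.mulVec m) r - (G.mulVec m') r := by
      simp [Matrix.mulVec, dotProduct, hd, mul_sub, Finset.sum_sub_distrib]
    rw [this, ← hp, ← hp']
    have := hpar r.1 hr r.2
    simp only [Prod.mk.eta] at this
    rw [this, sub_self]
  -- submatrix times v is zero
  have hmv : (G.submatrix f g).mulVec v = 0 := by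
    funext j
    have key : ∑ t : Fin N, G (f j) (g t) * d (g t)
        = ∑ c : {x : Fin k × Fin k // x.2 ≠ last}, G (f j) c.val * d c.val :=
      Fintype.sum_equiv e2 _ _ (fun t => rfl)
    have split : ∑ c : Fin k × Fin k, G (f j) c * d c
        = ∑ c : {x : Fin k × Fin k // x.2 ≠ last}, G (f j) c.val * d c.val := by
      rw [← Finset.sum_subtype (Finset.univ.filter fun x : Fin k × Fin k => x.2 ≠ last)
        (by simp) (fun c => G (f j) c * d c)]
      rw [← Finset.sum_filter_add_sum_filter_not Finset.univ
        (fun x : Fin k × Fin k => x.2 ≠ last) (fun c => G (f j) c * d c)]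
      have : ∑ c ∈ Finset.univ.filter (fun x : Fin k × Fin k => ¬ x.2 ≠ last),
          G (f j) c * d c = 0 := by
        apply Finset.sum_eq_zero
        intro c hc
        simp only [Finset.mem_filter, not_not] at hc
        rw [hdlast c hc.2, mul_zero]
      rw [this, add_zero]
    have : (G.submatrix f g).mulVec v j = ∑ t : Fin N, G (f j) (g t) * d (g t) := by
      simp [Matrix.mulVec, dotProduct, Matrix.submatrix_apply, hv]
    rw [this, key, ← split]
    exact hrow (f j) (e1 j).prop
  have hv0 : v = 0 := Matrix.eq_zero_of_mulVec_eq_zero hdet hmv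
  have hd0 : ∀ c : Fin k × Fin k, d c = 0 := by
    intro c
    by_cases hc : c.2 = last
    · exact hdlast c hc
    · have := congrFun hv0 (e2.symm ⟨c, hc⟩)
      simpa [hv, hg] using this
  have hm : m = m' := by
    funext c
    have := hd0 c
    simpa [hd, sub_eq_zero] using this
  exact ⟨hm, by rw [hp, hp', hm]⟩
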